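/- Let π = {π_1,…,π_k} be a set partition of [n], let u = (u_I)_{I⊆[n]} be real numbers, and define v^{(i)}_J = Σ { u_I : I ⊆ [n], I ∩ π_i = J } for J ⊆ π_i. Suppose Θ is a real symmetric n×n matrix that is block diagonal with respect to π, each diagonal block Θ_{π_i} is positive definite, and each Θ_{π_i} is a critical point of L_{v^{(i)}} (all partial derivatives of L_{v^{(i)}} with respect to the entries of the block vanish). Then Θ is a critical point of L_u, i.e., all partial derivatives of L_u with respect to the entries θ_{ab} (a ≤ b, a,b ∈ [n]) vanish at Θ. -/

import Mathlib

noncomputable section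

/-- The principal minor of `Θ` indexed by the subset `I` (with `det(Θ_∅) = 1`). -/
def principalMinor {ι : Type*} [DecidableEq ι] (Θ : Matrix ι ι ℝ) (I : Finset ι) : ℝ :=
  (Θ.submatrix (fun a : {x // x ∈ I} => (a : ι)) (fun a : {x // x ∈ I} => (a : ι))).det

/-- The log-likelihood function of the determinantal point process model:
`L_u(Θ) = Σ_I u_I · log det(Θ_I) − (Σ_I u_I) · log det(Θ + Id)`. -/
def logLik {ι : Type*} [Fintype ι] [DecidableEq ι]
    (u : Finset ι → ℝ) (Θ : Matrix ι ι ℝ) : ℝ :=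
  (∑ I : Finset ι, u I * Real.log (principalMinor Θ I))
    - (∑ I : Finset ι, u I) * Real.log (Θ + 1).det

/-- The symmetric coordinate direction for the entry `θ_{ab}` of a symmetric matrix:
`E_{aa}` if `a = b`, and `E_{ab} + E_{ba}` if `a ≠ b`. -/
def symDir {ι : Type*} [DecidableEq ι] (a b : ι) : Matrix ι ι ℝ :=
  if a = b then Matrix.single a a 1
  else Matrix.single a b 1 + Matrix.single b a 1

/-- `Θ` is a critical point of `L_u`: all partial derivatives of `L_u` with respect to
the entries `θ_{ab}` of the symmetric matrix vanish at `Θ`. -/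
def IsCriticalPoint {ι : Type*} [Fintype ι] [DecidableEq ι]
    (u : Finset ι → ℝ) (Θ : Matrix ι ι ℝ) : Prop :=
  ∀ a b : ι, deriv (fun t : ℝ => logLik u (Θ + t • symDir a b)) 0 = 0

/-- The diagonal block `Θ_B` of `Θ` with rows and columns indexed by `B`. -/
def blockSub {ι : Type*} (Θ : Matrix ι ι ℝ) (B : Finset ι) :
    Matrix {x // x ∈ B} {x // x ∈ B} ℝ :=
  Θ.submatrix (fun a => (a : ι)) (fun a => (a : ι))

/-- The restricted data vector `v` on subsets of the block `B`:
`v_J = Σ { u_I : I ⊆ [n], I ∩ B = J }`. -/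
def restrictData {ι : Type*} [Fintype ι] [DecidableEq ι]
    (u : Finset ι → ℝ) (B : Finset ι) (J : Finset {x // x ∈ B}) : ℝ :=
  ∑ I ∈ Finset.univ.filter
      (fun I : Finset ι => I ∩ B = J.map (Function.Embedding.subtype (· ∈ B))), u I

section Aux

open Matrix Finset

variable {ι : Type*} [DecidableEq ι]

lemma principalMinor_congr {M M' : Matrix ι ι ℝ} {I : Finset ι}
    (h : ∀ i ∈ I, ∀ j ∈ I, M i j = M' i j) : principalMinor M I = principalMinor M' I := by
  unfold principalMinor
  congr 1
  ext p q
  exact h p p.2 q q.2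

lemma principalMinor_univ [Fintype ι] (M : Matrix ι ι ℝ) :
    principalMinor M Finset.univ = M.det := by
  unfold principalMinor
  rw [← Matrix.det_submatrix_equiv_self (Equiv.subtypeUnivEquiv (fun x => Finset.mem_univ x)) M]
  congr!

/-- Equiv between a subset `J` of the subtype of `B` and its image in `ι`. -/
def mapSubtypeEquiv (B : Finset ι) (J : Finset {x // x ∈ B}) :
    {y : {x // x ∈ B} // y ∈ J} ≃ {x // x ∈ J.map (Function.Embedding.subtype (· ∈ B))} :=
  Equiv.ofBijective (fun y => ⟨(y.1 : ι), by
      simp only [Finset.mem_map, Function.Embedding.coe_subtype]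
      exact ⟨y.1, y.2, rfl⟩⟩)
    ⟨fun y z h => by
        have h' := congrArg Subtype.val h
        exact Subtype.ext (Subtype.ext h'),
      fun x => by
        obtain ⟨y, hy, hxy⟩ := Finset.mem_map.mp x.2
        exact ⟨⟨y, hy⟩, Subtype.ext hxy⟩⟩

lemma principalMinor_blockSub (M : Matrix ι ι ℝ) (B : Finset ι) (J : Finset {x // x ∈ B}) :
    principalMinor (blockSub M B) J
      = principalMinor M (J.map (Function.Embedding.subtype (· ∈ B))) := by
  unfold principalMinor blockSub
  rw [← Matrix.det_submatrix_equiv_self (mapSubtypeEquiv B J)]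
  congr 1

/-- Equiv splitting `I` into `I ∩ B` and `I \ B`. -/
def interSdiffEquiv (B I : Finset ι) : {x // x ∈ I ∩ B} ⊕ {x // x ∈ I \ B} ≃ {x // x ∈ I} :=
  { toFun := Sum.elim (fun y => ⟨y, (Finset.mem_inter.mp y.2).1⟩)
      (fun y => ⟨y, (Finset.mem_sdiff.mp y.2).1⟩)
    invFun := fun x => if h : (x : ι) ∈ B then Sum.inl ⟨x, Finset.mem_inter.mpr ⟨x.2, h⟩⟩
      else Sum.inr ⟨x, Finset.mem_sdiff.mpr ⟨x.2, h⟩⟩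
    left_inv := by
      rintro (y | y) <;> dsimp only [Sum.elim_inl, Sum.elim_inr]
      · rw [dif_pos (Finset.mem_inter.mp y.2).2]
      · rw [dif_neg (Finset.mem_sdiff.mp y.2).2]
    right_inv := by
      intro x
      dsimp only
      by_cases h : (x : ι) ∈ B
      · rw [dif_pos h]
        rfl
      · rw [dif_neg h]
        rfl }

lemma principalMinor_split (M : Matrix ι ι ℝ) (B I : Finset ι)
    (h1 : ∀ a b, a ∈ B → b ∉ B → M a b = 0)
    (h2 : ∀ a b, a ∉ B → b ∈ B → M a b = 0) :
    principalMinor M I = principalMinor M (I ∩ B) * principalMinor M (I \ B) := by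
  classical
  unfold principalMinor
  rw [← Matrix.det_submatrix_equiv_self (interSdiffEquiv B I)]
  have hmat : (M.submatrix (fun a : {x // x ∈ I} => (a : ι))
        (fun a : {x // x ∈ I} => (a : ι))).submatrix (interSdiffEquiv B I) (interSdiffEquiv B I)
      = Matrix.fromBlocks
          (M.submatrix (fun a : {x // x ∈ I ∩ B} => (a : ι)) (fun a : {x // x ∈ I ∩ B} => (a : ι)))
          0 0
          (M.submatrix (fun a : {x // x ∈ I \ B} => (a : ι)) (fun a : {x // x ∈ I \ B} => (a : ι))) := by
    ext (p | p) (q | q)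
    · rfl
    · exact h1 _ _ (Finset.mem_inter.mp p.2).2 (Finset.mem_sdiff.mp q.2).2
    · exact h2 _ _ (Finset.mem_sdiff.mp p.2).2 (Finset.mem_inter.mp q.2).2
    · rfl
  rw [hmat, Matrix.det_fromBlocks_zero₂₁]

lemma principalMinor_conj [Fintype ι] (d : ι → ℝ) (hd : ∀ i, d i * d i = 1)
    (M : Matrix ι ι ℝ) (I : Finset ι) :
    principalMinor (Matrix.diagonal d * M * Matrix.diagonal d) I = principalMinor M I := by
  unfold principalMinor
  have hmat : ((Matrix.diagonal d * M * Matrix.diagonal d).submatrix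
        (fun a : {x // x ∈ I} => (a : ι)) (fun a : {x // x ∈ I} => (a : ι)))
      = Matrix.diagonal (fun p : {x // x ∈ I} => d p)
          * (M.submatrix (fun a : {x // x ∈ I} => (a : ι)) (fun a : {x // x ∈ I} => (a : ι)))
          * Matrix.diagonal (fun p : {x // x ∈ I} => d p) := by
    ext p q
    simp [Matrix.mul_diagonal, Matrix.diagonal_mul]
  rw [hmat, Matrix.det_mul, Matrix.det_mul, Matrix.det_diagonal]
  have h2 : (∏ p : {x // x ∈ I}, d ↑p) * (∏ p : {x // x ∈ I}, d ↑p) = 1 := by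
    rw [← Finset.prod_mul_distrib]
    exact Finset.prod_eq_one fun p _ => hd p
  linear_combination (M.submatrix (fun a : {x // x ∈ I} => (a : ι))
    (fun a : {x // x ∈ I} => (a : ι))).det * h2

lemma det_conj [Fintype ι] (d : ι → ℝ) (hd : ∀ i, d i * d i = 1) (M : Matrix ι ι ℝ) :
    (Matrix.diagonal d * M * Matrix.diagonal d).det = M.det := by
  rw [Matrix.det_mul, Matrix.det_mul, Matrix.det_diagonal]
  have h2 : (∏ i, d i) * (∏ i, d i) = 1 := by
    rw [← Finset.prod_mul_distrib]
    exact Finset.prod_eq_one fun p _ => hd p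
  linear_combination M.det * h2

lemma logLik_conj [Fintype ι] (u : Finset ι → ℝ) (d : ι → ℝ) (hd : ∀ i, d i * d i = 1)
    (M : Matrix ι ι ℝ) :
    logLik u (Matrix.diagonal d * M * Matrix.diagonal d) = logLik u M := by
  unfold logLik
  congr 1
  · exact Finset.sum_congr rfl fun I _ => by rw [principalMinor_conj d hd]
  · have h1 : Matrix.diagonal d * M * Matrix.diagonal d + 1
        = Matrix.diagonal d * (M + 1) * Matrix.diagonal d := by
      have hdd : Matrix.diagonal d * Matrix.diagonal d = (1 : Matrix ι ι ℝ) := by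
        rw [Matrix.diagonal_mul_diagonal]
        ext i j
        by_cases h : i = j <;> simp [h, Matrix.one_apply, hd]
      rw [Matrix.mul_add, Matrix.add_mul, Matrix.mul_one, hdd]
    rw [h1, det_conj d hd]

lemma Matrix.PosDef.submatrix_inj {m : Type*} [Fintype m] [DecidableEq m] [Fintype ι]
    {M : Matrix ι ι ℝ} (hM : M.PosDef) {e : m → ι} (he : Function.Injective e) :
    (M.submatrix e e).PosDef := by
  refine Matrix.PosDef.of_dotProduct_mulVec_pos (hM.posSemidef.submatrix e).1 fun x hx => ?_
  set y : ι → ℝ := fun i => ∑ j, if i = e j then x j else 0 with hy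
  have hsum : ∀ f : ι → ℝ, ∑ i, y i * f i = ∑ j, x j * f (e j) := by
    intro f
    simp only [hy, Finset.sum_mul, ite_mul, zero_mul]
    rw [Finset.sum_comm]
    simp [Finset.sum_ite_eq']
  have hye : ∀ j, y (e j) = x j := by
    intro j
    simp only [hy]
    rw [Finset.sum_eq_single j (fun k _ hk => if_neg (fun h => hk (he h.symm))) (by simp)]
    simp
  have hy0 : y ≠ 0 := by
    obtain ⟨j, hj⟩ := Function.ne_iff.mp hx
    exact Function.ne_iff.mpr ⟨e j, by simpa [hye j] using hj⟩
  have key : star x ⬝ᵥ (M.submatrix e e) *ᵥ x = star y ⬝ᵥ M *ᵥ y := by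
    have hR : star y ⬝ᵥ M *ᵥ y = ∑ j, x j * ∑ i', M (e j) i' * y i' := by
      simp only [dotProduct, Matrix.mulVec, star_trivial]
      exact hsum _
    have hL : star x ⬝ᵥ (M.submatrix e e) *ᵥ x = ∑ j, x j * ∑ k, M (e j) (e k) * x k := by
      simp only [dotProduct, Matrix.mulVec, star_trivial, Matrix.submatrix_apply]
    rw [hL, hR]
    refine Finset.sum_congr rfl fun j _ => ?_
    congr 1
    calc ∑ k, M (e j) (e k) * x k = ∑ k, x k * M (e j) (e k) :=
          Finset.sum_congr rfl fun k _ => mul_comm _ _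
      _ = ∑ i', y i' * M (e j) i' := (hsum _).symm
      _ = ∑ i', M (e j) i' * y i' := Finset.sum_congr rfl fun i' _ => mul_comm _ _
  rw [key]
  exact hM.dotProduct_mulVec_pos hy0

lemma principalMinor_pos [Fintype ι] {M : Matrix ι ι ℝ} (hM : M.PosDef) (I : Finset ι) :
    0 < principalMinor M I :=
  (hM.submatrix_inj Subtype.val_injective).det_pos

lemma posDef_of_blocks {n : ℕ} (π : Finset (Finset (Fin n)))
    (hdisj : ∀ B ∈ π, ∀ B' ∈ π, B ≠ B' → Disjoint B B')
    (hcover : ∀ a : Fin n, ∃ B ∈ π, a ∈ B)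
    (Θ : Matrix (Fin n) (Fin n) ℝ) (hsymm : Θ.IsSymm)
    (hblock : ∀ B ∈ π, ∀ B' ∈ π, B ≠ B' → ∀ a ∈ B, ∀ b ∈ B', Θ a b = 0)
    (hpd : ∀ B ∈ π, (blockSub Θ B).PosDef) : Θ.PosDef := by
  refine Matrix.PosDef.of_dotProduct_mulVec_pos ?_ ?_
  · show Θᴴ = Θ
    have h : Θᴴ = Θᵀ := by ext i j; simp [Matrix.conjTranspose_apply]
    rw [h, hsymm]
  intro x hx
  have huniv : (Finset.univ : Finset (Fin n)) = π.biUnion id := by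
    ext a
    simp only [Finset.mem_univ, Finset.mem_biUnion, id, true_iff]
    exact hcover a
  have hdisj' : Set.PairwiseDisjoint (π : Set (Finset (Fin n))) id := by
    intro B hB B' hB' hne
    exact hdisj B hB B' hB' hne
  have hmain : star x ⬝ᵥ Θ *ᵥ x
      = ∑ B ∈ π, star (fun p : {y // y ∈ B} => x ↑p) ⬝ᵥ (blockSub Θ B) *ᵥ (fun p => x ↑p) := by
    rw [show star x ⬝ᵥ Θ *ᵥ x = ∑ i, x i * ∑ j, Θ i j * x j from by
      simp [dotProduct, Matrix.mulVec]]
    have hstep : (∑ i, x i * ∑ j, Θ i j * x j)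
        = ∑ i ∈ π.biUnion id, x i * ∑ j, Θ i j * x j := by
      rw [← huniv]
    rw [hstep, Finset.sum_biUnion hdisj']
    refine Finset.sum_congr rfl fun B hB => ?_
    have hinner : ∀ i ∈ B, (∑ j, Θ i j * x j) = ∑ j ∈ B, Θ i j * x j := by
      intro i hi
      refine (Finset.sum_subset (Finset.subset_univ B) fun j _ hj => ?_).symm
      obtain ⟨B', hB', hjB'⟩ := hcover j
      have hne : B ≠ B' := fun h => hj (h ▸ hjB')
      rw [hblock B hB B' hB' hne i hi j hjB', zero_mul]
    calc (∑ i ∈ (id B : Finset (Fin n)), x i * ∑ j, Θ i j * x j)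
        = ∑ i ∈ B, x i * ∑ j ∈ B, Θ i j * x j :=
          Finset.sum_congr rfl fun i hi => by rw [hinner i hi]
      _ = ∑ p : {y // y ∈ B}, x ↑p * ∑ j ∈ B, Θ ↑p j * x j := by
          rw [← Finset.sum_coe_sort B]
      _ = ∑ p : {y // y ∈ B}, x ↑p * ∑ q : {y // y ∈ B}, Θ ↑p ↑q * x ↑q := by
          refine Finset.sum_congr rfl fun p _ => ?_
          rw [← Finset.sum_coe_sort B (fun j => Θ ↑p j * x j)]
      _ = star (fun p : {y // y ∈ B} => x ↑p) ⬝ᵥ (blockSub Θ B) *ᵥ (fun p => x ↑p) := by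
          simp [dotProduct, Matrix.mulVec, blockSub, Matrix.submatrix_apply]
  rw [hmain]
  obtain ⟨i0, hi0⟩ := Function.ne_iff.mp hx
  obtain ⟨B0, hB0, hiB0⟩ := hcover i0
  refine Finset.sum_pos' (fun B hB => ?_) ⟨B0, hB0, ?_⟩
  · by_cases h : (fun p : {y // y ∈ B} => x ↑p) = 0
    · rw [h]; simp
    · exact le_of_lt ((hpd B hB).dotProduct_mulVec_pos h)
  · exact (hpd B0 hB0).dotProduct_mulVec_pos (Function.ne_iff.mpr ⟨⟨i0, hiB0⟩, hi0⟩)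

end Aux

/-- If `Θ` is symmetric and block diagonal with respect to the set partition `π`,
with positive-definite diagonal blocks, and each block `Θ_B` is a critical point of the
restricted log-likelihood `L_{v^{(B)}}`, then `Θ` is a critical point of `L_u`. -/
theorem isCriticalPoint_of_blocks {n : ℕ}
    (π : Finset (Finset (Fin n)))
    (hne : ∀ B ∈ π, B.Nonempty)
    (hdisj : ∀ B ∈ π, ∀ B' ∈ π, B ≠ B' → Disjoint B B')
    (hcover : ∀ a : Fin n, ∃ B ∈ π, a ∈ B)
    (u : Finset (Fin n) → ℝ)
    (Θ : Matrix (Fin n) (Fin n) ℝ) (hsymm : Θ.IsSymm)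
    (hblock : ∀ B ∈ π, ∀ B' ∈ π, B ≠ B' → ∀ a ∈ B, ∀ b ∈ B', Θ a b = 0)
    (hpd : ∀ B ∈ π, (blockSub Θ B).PosDef)
    (hcrit : ∀ B ∈ π, IsCriticalPoint (restrictData u B) (blockSub Θ B)) :
    IsCriticalPoint u Θ := by
  intro a b
  obtain ⟨B, hB, haB⟩ := hcover a
  obtain ⟨B', hB', hbB'⟩ := hcover b
  have hΘ0 : ∀ i j : Fin n, i ∈ B → j ∉ B → Θ i j = 0 := by
    intro i j hi hj
    obtain ⟨B2, hB2, hjB2⟩ := hcover j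
    exact hblock B hB B2 hB2 (fun h => hj (h ▸ hjB2)) i hi j hjB2
  have hΘ0' : ∀ i j : Fin n, i ∉ B → j ∈ B → Θ i j = 0 := by
    intro i j hi hj
    obtain ⟨B2, hB2, hiB2⟩ := hcover i
    exact hblock B2 hB2 B hB (fun h => hi (h ▸ hiB2)) i hiB2 j hj
  by_cases hBB : B = B'
  · -- same-block case
    subst hBB
    have hΘpd : Θ.PosDef := posDef_of_blocks π hdisj hcover Θ hsymm hblock hpd
    have hEnot : ∀ i j : Fin n, (i ∉ B ∨ j ∉ B) → symDir a b i j = 0 := by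
      intro i j hij
      have h1 : ¬(a = i ∧ b = j) := by
        rintro ⟨ha', hb'⟩
        rcases hij with h | h
        · exact h (ha' ▸ haB)
        · exact h (hb' ▸ hbB')
      have h2 : ¬(b = i ∧ a = j) := by
        rintro ⟨hb', ha'⟩
        rcases hij with h | h
        · exact h (hb' ▸ hbB')
        · exact h (ha' ▸ haB)
      by_cases hab : a = b
      · subst hab
        rw [symDir, if_pos rfl, Matrix.single_apply_of_ne (h := h1)]
      · rw [symDir, if_neg hab, Matrix.add_apply,
          Matrix.single_apply_of_ne (h := h1),
          Matrix.single_apply_of_ne (h := h2), add_zero]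
    have hiff : ((⟨a, haB⟩ : {x // x ∈ B}) = ⟨b, hbB'⟩) ↔ a = b := by
      simp [Subtype.ext_iff]
    have hEsub : ∀ (p q : {x // x ∈ B}), symDir a b (↑p) (↑q)
        = symDir (⟨a, haB⟩ : {x // x ∈ B}) (⟨b, hbB'⟩ : {x // x ∈ B}) p q := by
      intro p q
      by_cases hab : a = b <;>
        simp [symDir, hab, hiff, Matrix.single, Subtype.ext_iff]
    have hsubM : ∀ t : ℝ, blockSub (Θ + t • symDir a b) B
        = blockSub Θ B + t • symDir (⟨a, haB⟩ : {x // x ∈ B}) ⟨b, hbB'⟩ := by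
      intro t
      ext p q
      simp only [blockSub, Matrix.submatrix_apply, Matrix.add_apply, Matrix.smul_apply,
        smul_eq_mul]
      rw [hEsub p q]
    have hsubM1 : ∀ t : ℝ, blockSub (Θ + t • symDir a b + 1) B
        = blockSub Θ B + t • symDir (⟨a, haB⟩ : {x // x ∈ B}) ⟨b, hbB'⟩ + 1 := by
      intro t
      ext p q
      simp only [blockSub, Matrix.submatrix_apply, Matrix.add_apply, Matrix.smul_apply,
        smul_eq_mul]
      rw [hEsub p q]
      congr 1
      rw [Matrix.one_apply, Matrix.one_apply]
      exact if_congr Subtype.ext_iff.symm rfl rfl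
    have hJmap : ∀ I : Finset (Fin n),
        ((I ∩ B).subtype (· ∈ B)).map (Function.Embedding.subtype (· ∈ B)) = I ∩ B := by
      intro I
      rw [Finset.subtype_map]
      exact Finset.filter_true_of_mem fun x hx => (Finset.mem_inter.mp hx).2
    have hJiff : ∀ (I : Finset (Fin n)) (J : Finset {x // x ∈ B}),
        (I ∩ B).subtype (· ∈ B) = J ↔ I ∩ B = J.map (Function.Embedding.subtype (· ∈ B)) := by
      intro I J
      constructor
      · rintro rfl
        exact (hJmap I).symm
      · intro h
        apply Finset.map_injective (Function.Embedding.subtype (· ∈ B))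
        rw [hJmap I, h]
    have hfib : ∀ g : Finset {x // x ∈ B} → ℝ,
        ∑ I : Finset (Fin n), u I * g ((I ∩ B).subtype (· ∈ B))
          = ∑ J : Finset {x // x ∈ B}, restrictData u B J * g J := by
      intro g
      rw [← Finset.sum_fiberwise Finset.univ (fun I : Finset (Fin n) => (I ∩ B).subtype (· ∈ B))
        (fun I => u I * g ((I ∩ B).subtype (· ∈ B)))]
      refine Finset.sum_congr rfl fun J _ => ?_
      have hset : Finset.univ.filter (fun I : Finset (Fin n) => (I ∩ B).subtype (· ∈ B) = J)
          = Finset.univ.filter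
            (fun I : Finset (Fin n) => I ∩ B = J.map (Function.Embedding.subtype (· ∈ B))) := by
        ext I
        simp only [Finset.mem_filter, Finset.mem_univ, true_and]
        exact hJiff I J
      rw [hset, restrictData, Finset.sum_mul]
      refine Finset.sum_congr rfl fun I hI => ?_
      rw [(hJiff I J).mpr (Finset.mem_filter.mp hI).2]
    have hS : ∑ J : Finset {x // x ∈ B}, restrictData u B J = ∑ I : Finset (Fin n), u I := by
      have h := hfib (fun _ => 1)
      simpa using h.symm
    have hz1 : ∀ t : ℝ, ∀ i j : Fin n, i ∈ B → j ∉ B → (Θ + t • symDir a b) i j = 0 := by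
      intro t i j hi hj
      simp [Matrix.add_apply, Matrix.smul_apply, hΘ0 i j hi hj, hEnot i j (Or.inr hj)]
    have hz2 : ∀ t : ℝ, ∀ i j : Fin n, i ∉ B → j ∈ B → (Θ + t • symDir a b) i j = 0 := by
      intro t i j hi hj
      simp [Matrix.add_apply, Matrix.smul_apply, hΘ0' i j hi hj, hEnot i j (Or.inl hi)]
    have hz1' : ∀ t : ℝ, ∀ i j : Fin n, i ∈ B → j ∉ B → (Θ + t • symDir a b + 1) i j = 0 := by
      intro t i j hi hj
      have hij : i ≠ j := fun h => hj (h ▸ hi)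
      simp [Matrix.add_apply, Matrix.smul_apply, hΘ0 i j hi hj, hEnot i j (Or.inr hj),
        Matrix.one_apply_ne hij]
    have hz2' : ∀ t : ℝ, ∀ i j : Fin n, i ∉ B → j ∈ B → (Θ + t • symDir a b + 1) i j = 0 := by
      intro t i j hi hj
      have hij : i ≠ j := fun h => hi (h ▸ hj)
      simp [Matrix.add_apply, Matrix.smul_apply, hΘ0' i j hi hj, hEnot i j (Or.inl hi),
        Matrix.one_apply_ne hij]
    have humap : (Finset.univ : Finset {x // x ∈ B}).map
        (Function.Embedding.subtype (· ∈ B)) = B := by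
      rw [Finset.univ_eq_attach]
      exact Finset.attach_map_val
    have hcontJ : ∀ J : Finset {x // x ∈ B}, Continuous fun t : ℝ =>
        principalMinor (blockSub Θ B + t • symDir (⟨a, haB⟩ : {x // x ∈ B}) ⟨b, hbB'⟩) J := by
      intro J
      unfold principalMinor
      exact (((continuous_const.add (continuous_id.smul continuous_const)).matrix_submatrix
        _ _).matrix_det)
    have hcontD : Continuous fun t : ℝ =>
        (blockSub Θ B + t • symDir (⟨a, haB⟩ : {x // x ∈ B}) ⟨b, hbB'⟩ + 1).det :=
      ((continuous_const.add (continuous_id.smul continuous_const)).add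
        continuous_const).matrix_det
    have hev : ∀ᶠ t : ℝ in nhds 0,
        (∀ J : Finset {x // x ∈ B},
          0 < principalMinor (blockSub Θ B + t • symDir (⟨a, haB⟩ : {x // x ∈ B}) ⟨b, hbB'⟩) J)
        ∧ 0 < (blockSub Θ B + t • symDir (⟨a, haB⟩ : {x // x ∈ B}) ⟨b, hbB'⟩ + 1).det := by
      apply Filter.Eventually.and
      · rw [Filter.eventually_all]
        intro J
        have h0 : (0:ℝ) < (fun t : ℝ =>
            principalMinor (blockSub Θ B + t • symDir (⟨a, haB⟩ : {x // x ∈ B}) ⟨b, hbB'⟩) J)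
              0 := by
          simpa using principalMinor_pos (hpd B hB) J
        exact ContinuousAt.eventually_lt continuousAt_const (hcontJ J).continuousAt h0
      · have h0 : (0:ℝ) < (fun t : ℝ =>
            (blockSub Θ B + t • symDir (⟨a, haB⟩ : {x // x ∈ B}) ⟨b, hbB'⟩ + 1).det) 0 := by
          simpa using ((hpd B hB).add Matrix.PosDef.one).det_pos
        exact ContinuousAt.eventually_lt continuousAt_const hcontD.continuousAt h0
    have heq : (fun t : ℝ => logLik u (Θ + t • symDir a b)) =ᶠ[nhds 0]
        (fun t : ℝ => logLik (restrictData u B)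
            (blockSub Θ B + t • symDir (⟨a, haB⟩ : {x // x ∈ B}) ⟨b, hbB'⟩)
          + ((∑ I : Finset (Fin n), u I * Real.log (principalMinor Θ (I \ B)))
            - (∑ I : Finset (Fin n), u I)
              * Real.log (principalMinor (Θ + 1) (Finset.univ \ B)))) := by
      filter_upwards [hev] with t ht
      have hterm : ∀ I : Finset (Fin n),
          Real.log (principalMinor (Θ + t • symDir a b) I)
            = Real.log (principalMinor
                (blockSub Θ B + t • symDir (⟨a, haB⟩ : {x // x ∈ B}) ⟨b, hbB'⟩)
                ((I ∩ B).subtype (· ∈ B)))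
              + Real.log (principalMinor Θ (I \ B)) := by
        intro I
        rw [principalMinor_split (Θ + t • symDir a b) B I (hz1 t) (hz2 t)]
        have e1 : principalMinor
            (blockSub Θ B + t • symDir (⟨a, haB⟩ : {x // x ∈ B}) ⟨b, hbB'⟩)
            ((I ∩ B).subtype (· ∈ B))
            = principalMinor (Θ + t • symDir a b) (I ∩ B) := by
          rw [← hsubM t, principalMinor_blockSub, hJmap I]
        have e2 : principalMinor (Θ + t • symDir a b) (I \ B) = principalMinor Θ (I \ B) := by
          apply principalMinor_congr
          intro i hi j hj
          simp [Matrix.add_apply, Matrix.smul_apply,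
            hEnot i j (Or.inl (Finset.mem_sdiff.mp hi).2)]
        rw [← e1, e2, Real.log_mul (ne_of_gt (ht.1 _)) (ne_of_gt (principalMinor_pos hΘpd _))]
      have hdet : Real.log ((Θ + t • symDir a b + 1).det)
          = Real.log ((blockSub Θ B + t • symDir (⟨a, haB⟩ : {x // x ∈ B}) ⟨b, hbB'⟩ + 1).det)
            + Real.log (principalMinor (Θ + 1) (Finset.univ \ B)) := by
        rw [← principalMinor_univ (Θ + t • symDir a b + 1),
          principalMinor_split (Θ + t • symDir a b + 1) B Finset.univ (hz1' t) (hz2' t)]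
        have d1 : principalMinor (Θ + t • symDir a b + 1) (Finset.univ ∩ B)
            = (blockSub Θ B + t • symDir (⟨a, haB⟩ : {x // x ∈ B}) ⟨b, hbB'⟩ + 1).det := by
          rw [Finset.univ_inter]
          have h' : principalMinor (Θ + t • symDir a b + 1) B
              = principalMinor (blockSub (Θ + t • symDir a b + 1) B) Finset.univ := by
            rw [principalMinor_blockSub, humap]
          rw [h', principalMinor_univ, hsubM1 t]
        have d2 : principalMinor (Θ + t • symDir a b + 1) (Finset.univ \ B)
            = principalMinor (Θ + 1) (Finset.univ \ B) := by
          apply principalMinor_congr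
          intro i hi j hj
          simp [Matrix.add_apply, Matrix.smul_apply,
            hEnot i j (Or.inl (Finset.mem_sdiff.mp hi).2)]
        rw [d1, d2, Real.log_mul (ne_of_gt ht.2)
          (ne_of_gt (principalMinor_pos (hΘpd.add Matrix.PosDef.one) _))]
      have h1 : ∑ I : Finset (Fin n), u I * Real.log (principalMinor (Θ + t • symDir a b) I)
          = (∑ J : Finset {x // x ∈ B}, restrictData u B J * Real.log (principalMinor
              (blockSub Θ B + t • symDir (⟨a, haB⟩ : {x // x ∈ B}) ⟨b, hbB'⟩) J))
            + ∑ I : Finset (Fin n), u I * Real.log (principalMinor Θ (I \ B)) := by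
        rw [← hfib (fun J => Real.log (principalMinor
          (blockSub Θ B + t • symDir (⟨a, haB⟩ : {x // x ∈ B}) ⟨b, hbB'⟩) J)),
          ← Finset.sum_add_distrib]
        exact Finset.sum_congr rfl fun I _ => by rw [hterm I, mul_add]
      show logLik u (Θ + t • symDir a b) = _
      rw [logLik, logLik, h1, hdet, hS]
      ring
    rw [heq.deriv_eq, deriv_add_const]
    exact hcrit B hB ⟨a, haB⟩ ⟨b, hbB'⟩
  · -- off-block case
    have hbnB : b ∉ B := fun h => (Finset.disjoint_left.mp (hdisj B hB B' hB' hBB)) h hbB'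
    have hab : a ≠ b := fun h => hbnB (h ▸ haB)
    set d : Fin n → ℝ := fun i => if i ∈ B then -1 else 1 with hd_def
    have hd : ∀ i, d i * d i = 1 := fun i => by by_cases h : i ∈ B <;> simp [hd_def, h]
    have hE : ∀ i j : Fin n, ((i ∈ B ∧ j ∈ B) ∨ (i ∉ B ∧ j ∉ B)) → symDir a b i j = 0 := by
      intro i j hij
      have hai : ¬(a = i ∧ b = j) := by
        rintro ⟨h1, h2⟩
        rcases hij with ⟨hi, hj⟩ | ⟨hi, hj⟩
        · exact hbnB (h2 ▸ hj)
        · exact hi (h1 ▸ haB)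
      have hbi : ¬(b = i ∧ a = j) := by
        rintro ⟨h1, h2⟩
        rcases hij with ⟨hi, hj⟩ | ⟨hi, hj⟩
        · exact hbnB (h1 ▸ hi)
        · exact hj (h2 ▸ haB)
      rw [symDir, if_neg hab, Matrix.add_apply,
        Matrix.single_apply_of_ne (h := hai),
        Matrix.single_apply_of_ne (h := hbi), add_zero]
    have hconj : ∀ t : ℝ, Matrix.diagonal d * (Θ + t • symDir a b) * Matrix.diagonal d
        = Θ + (-t) • symDir a b := by
      intro t
      ext i j
      rw [Matrix.mul_diagonal, Matrix.diagonal_mul]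
      simp only [Matrix.add_apply, Matrix.smul_apply, smul_eq_mul]
      by_cases hi : i ∈ B <;> by_cases hj : j ∈ B
      · rw [hE i j (Or.inl ⟨hi, hj⟩)]
        simp [hd_def, hi, hj]
      · rw [hΘ0 i j hi hj]
        simp only [hd_def, if_pos hi, if_neg hj]
        ring
      · rw [hΘ0' i j hi hj]
        simp only [hd_def, if_neg hi, if_pos hj]
        ring
      · rw [hE i j (Or.inr ⟨hi, hj⟩)]
        simp [hd_def, hi, hj]
    have heven : ∀ t : ℝ, logLik u (Θ + (-t) • symDir a b) = logLik u (Θ + t • symDir a b) := by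
      intro t
      rw [← hconj t, logLik_conj u d hd]
    have hfe : (fun t : ℝ => logLik u (Θ + t • symDir a b))
        = fun t : ℝ => logLik u (Θ + (-t) • symDir a b) := funext fun t => (heven t).symm
    have hder : deriv (fun t : ℝ => logLik u (Θ + t • symDir a b)) 0
        = -deriv (fun t : ℝ => logLik u (Θ + t • symDir a b)) 0 := by
      conv_lhs => rw [hfe]
      have h := deriv_comp_neg (fun s : ℝ => logLik u (Θ + s • symDir a b)) (0 : ℝ)
      rw [neg_zero] at h
      exact h
    linarith [hder]

end
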